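/- For a weak contact metric structure (φ,Q,ξ,η,g) on M, the tensor h, defined by hX := ½([ξ,φX] - φ[ξ,X]), satisfies for every smooth vector field X: h(φX) + φ(hX) = ½([Q̃X, ξ] - Q̃[X,ξ]), where Q̃ := Q - id. -/

import Mathlib

open scoped Manifold

noncomputable section

/-- Smooth vector fields on a manifold `M`, modelled as derivations of the algebra of smooth
real-valued functions on `M`. -/
abbrev VectorField {E : Type*} [NormedAddCommGroup E] [NormedSpace ℝ E]
    {H : Type*} [TopologicalSpace H] (I : ModelWithCorners ℝ E H)
    (M : Type*) [TopologicalSpace M] [ChartedSpace H M] :=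
  Derivation ℝ C^(⊤ : ℕ∞)⟮I, M; ℝ⟯ C^(⊤ : ℕ∞)⟮I, M; ℝ⟯

variable {E : Type*} [NormedAddCommGroup E] [NormedSpace ℝ E]
  {H : Type*} [TopologicalSpace H] {I : ModelWithCorners ℝ E H}
  {M : Type*} [TopologicalSpace M] [ChartedSpace H M]

/-- `dη(X,Y) = ½ (X(η(Y)) - Y(η(X)) - η([X,Y]))`. -/
def dEta (η : VectorField I M →ₗ[C^(⊤ : ℕ∞)⟮I, M; ℝ⟯] C^(⊤ : ℕ∞)⟮I, M; ℝ⟯)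
    (X Y : VectorField I M) : C^(⊤ : ℕ∞)⟮I, M; ℝ⟯ :=
  (2 : ℝ)⁻¹ • (X (η Y) - Y (η X) - η ⁅X, Y⁆)

/-- The Nijenhuis torsion `[φ,φ](X,Y) = φ²[X,Y] + [φX,φY] - φ[φX,Y] - φ[X,φY]`. -/
def nijenhuis (φ : VectorField I M → VectorField I M) (X Y : VectorField I M) :
    VectorField I M :=
  φ (φ ⁅X, Y⁆) + ⁅φ X, φ Y⁆ - φ ⁅φ X, Y⁆ - φ ⁅X, φ Y⁆

/-- `N⁽¹⁾(X,Y) = [φ,φ](X,Y) + 2 dη(X,Y) Qξ`. -/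
def N1 (φ Q : VectorField I M →ₗ[C^(⊤ : ℕ∞)⟮I, M; ℝ⟯] VectorField I M)
    (ξ : VectorField I M) (η : VectorField I M →ₗ[C^(⊤ : ℕ∞)⟮I, M; ℝ⟯] C^(⊤ : ℕ∞)⟮I, M; ℝ⟯)
    (X Y : VectorField I M) : VectorField I M :=
  nijenhuis ⇑φ X Y + ((2 : ℝ) • dEta η X Y) • Q ξ

/-- `N⁽²⁾(X,Y) = (φX)(η(Y)) - η([φX,Y]) - (φY)(η(X)) + η([φY,X])`. -/
def N2 (φ : VectorField I M →ₗ[C^(⊤ : ℕ∞)⟮I, M; ℝ⟯] VectorField I M)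
    (η : VectorField I M →ₗ[C^(⊤ : ℕ∞)⟮I, M; ℝ⟯] C^(⊤ : ℕ∞)⟮I, M; ℝ⟯)
    (X Y : VectorField I M) : C^(⊤ : ℕ∞)⟮I, M; ℝ⟯ :=
  (φ X) (η Y) - η ⁅φ X, Y⁆ - (φ Y) (η X) + η ⁅φ Y, X⁆


private lemma bracket_add_aux (ξ X Y : VectorField I M) :
    ⁅ξ, X + Y⁆ = ⁅ξ, X⁆ + ⁅ξ, Y⁆ := by
  ext a
  simp [Derivation.commutator_apply]
  ring

private lemma bracket_neg_aux (ξ X : VectorField I M) : ⁅ξ, -X⁆ = -⁅ξ, X⁆ := by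
  ext a
  simp [Derivation.commutator_apply]
  ring

private lemma bracket_skew_aux (X Y : VectorField I M) : ⁅X, Y⁆ = -⁅Y, X⁆ := by
  ext a
  simp [Derivation.commutator_apply]

private lemma bracket_sub_lie_aux (X Y ξ : VectorField I M) :
    ⁅X - Y, ξ⁆ = ⁅X, ξ⁆ - ⁅Y, ξ⁆ := by
  ext a
  simp [Derivation.commutator_apply]
  ring

private lemma bracket_smul_aux (ξ Z : VectorField I M) (f : C^(⊤ : ℕ∞)⟮I, M; ℝ⟯) :
    ⁅ξ, f • Z⁆ = ξ f • Z + f • ⁅ξ, Z⁆ := by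
  ext a
  simp [Derivation.commutator_apply]
  ring

private lemma bracket_rsmul_self_aux (ξ : VectorField I M) (ν : ℝ) : ⁅ξ, ν • ξ⁆ = 0 := by
  ext a
  simp [Derivation.commutator_apply]

set_option maxHeartbeats 1000000 in
theorem weak_contact_h_phi_anticommutator
    [FiniteDimensional ℝ E] [I.Boundaryless] [IsManifold I (⊤ : ℕ∞) M]
    (n : ℕ) (hn : 1 ≤ n) (hdim : Module.finrank ℝ E = 2 * n + 1)
    (φ Q : VectorField I M →ₗ[C^(⊤ : ℕ∞)⟮I, M; ℝ⟯] VectorField I M)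
    (hQ : Function.Bijective Q)
    (ξ : VectorField I M)
    (η : VectorField I M →ₗ[C^(⊤ : ℕ∞)⟮I, M; ℝ⟯] C^(⊤ : ℕ∞)⟮I, M; ℝ⟯)
    (g : VectorField I M →ₗ[C^(⊤ : ℕ∞)⟮I, M; ℝ⟯] VectorField I M →ₗ[C^(⊤ : ℕ∞)⟮I, M; ℝ⟯] C^(⊤ : ℕ∞)⟮I, M; ℝ⟯)
    (ν : ℝ) (hν : 0 < ν)
    (hφφ : ∀ X, φ (φ X) = -(Q X) + η X • Q ξ)
    (hηξ : η ξ = 1)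
    (hQξ : Q ξ = ν • ξ)
    (hD : ∀ X, η X = 0 → η (φ X) = 0)
    (hg_symm : ∀ X Y, g X Y = g Y X)
    (hg_pos : ∀ X (x : M), 0 ≤ g X X x)
    (hg_def : ∀ X, g X X = 0 → X = 0)
    (hcompat : ∀ X Y, g (φ X) (φ Y) = g X (Q Y) - η X * η (Q Y))
    (hcontact : ∀ X Y, g X (φ Y) = dEta η X Y)
    :
    ∀ X, (2 : ℝ)⁻¹ • (⁅ξ, φ (φ X)⁆ - φ ⁅ξ, φ X⁆) +
        φ ((2 : ℝ)⁻¹ • (⁅ξ, φ X⁆ - φ ⁅ξ, X⁆)) =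
      (2 : ℝ)⁻¹ • (⁅Q X - X, ξ⁆ - (Q ⁅X, ξ⁆ - ⁅X, ξ⁆)) := by

  -- φ²ξ = 0
  have hφφξ : φ (φ ξ) = 0 := by
    rw [hφφ, hηξ, one_smul]; exact neg_add_cancel _
  -- dη(ξ, φξ) = 0
  have h1 : dEta η ξ (φ ξ) = 0 := by
    rw [← hcontact, hφφξ, map_zero]
  -- dη(φξ, ξ) = 0 by antisymmetry
  have h2 : dEta η (φ ξ) ξ = 0 := by
    have hanti : dEta η (φ ξ) ξ = - dEta η ξ (φ ξ) := by
      unfold dEta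
      rw [bracket_skew_aux (φ ξ) ξ,
        map_neg, ← smul_neg]
      congr 1
      ring
    rw [hanti, h1, neg_zero]
  -- φξ = 0
  have hφξ : φ ξ = 0 := by
    apply hg_def
    exact (hcontact (φ ξ) ξ).trans h2
  -- ξ(ηX) = η⁅ξ,X⁆
  have hcomm : ∀ X, ξ (η X) = η ⁅ξ, X⁆ := by
    intro X
    have h3 : dEta η X ξ = 0 := by
      rw [← hcontact, hφξ, map_zero]
    unfold dEta at h3
    rw [hηξ, Derivation.map_one_eq_zero,
      bracket_skew_aux X ξ, map_neg] at h3
    have h4 : (0 : C^(⊤ : ℕ∞)⟮I, M; ℝ⟯) - ξ (η X) - -(η ⁅ξ, X⁆) = 0 := by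
      have h5 := congrArg (fun t : C^(⊤ : ℕ∞)⟮I, M; ℝ⟯ => (2 : ℝ) • t) h3
      simpa [smul_smul, mul_inv_cancel₀ (two_ne_zero (α := ℝ))] using h5
    linear_combination -h4
  intro X
  have key : ⁅ξ, φ (φ X)⁆ - φ (φ ⁅ξ, X⁆) = ⁅Q X - X, ξ⁆ - (Q ⁅X, ξ⁆ - ⁅X, ξ⁆) := by
    rw [hφφ X, hφφ ⁅ξ, X⁆, hQξ, bracket_add_aux, bracket_neg_aux, bracket_smul_aux,
      bracket_rsmul_self_aux, smul_zero, add_zero, hcomm X]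
    rw [bracket_sub_lie_aux, bracket_skew_aux (Q X) ξ,
      bracket_skew_aux X ξ, map_neg]
    abel
  rw [LinearMap.map_smul_of_tower, map_sub, ← smul_add, sub_add_sub_cancel, key]
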